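/- Let C ⊂ ℝ_{>0} be a compact set and let ℳ ⊆ (ℝ[X^{±}])^n be an ℝ[X^{±}]-submodule. Suppose for every r ∈ C there exists f_r ∈ ℳ with all n coordinates of f_r(r) strictly positive. Then there exists a single f_C ∈ ℳ such that all coordinates of f_C(x) are strictly positive for every x ∈ C. -/

import Mathlib

open LaurentPolynomial

/-- Evaluation of a real Laurent polynomial at a (positive) real number. -/
noncomputable def evalAt (f : LaurentPolynomial ℝ) (r : ℝ) : ℝ :=
  f.coeff.support.sum fun k => f.coeff k * r ^ k

lemma evalAt_def (f : LaurentPolynomial ℝ) (r : ℝ) :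
    evalAt f r = f.coeff.sum fun k a => a * r ^ k := rfl

lemma evalAt_single (k : ℤ) (b : ℝ) (r : ℝ) :
    evalAt (AddMonoidAlgebra.single k b) r = b * r ^ k := by
  rw [evalAt_def]; exact Finsupp.sum_single_index (by simp)

lemma evalAt_add (f g : LaurentPolynomial ℝ) (r : ℝ) :
    evalAt (f + g) r = evalAt f r + evalAt g r := by
  simp only [evalAt_def]
  rw [AddMonoidAlgebra.coeff_add]
  exact Finsupp.sum_add_index' (by simp) (by intros; ring)

noncomputable def evalRingHom (r : ℝˣ) : LaurentPolynomial ℝ →+* ℝ :=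
  AddMonoidAlgebra.liftNCRingHom (RingHom.id ℝ)
    ((Units.coeHom ℝ).comp (zpowersHom ℝˣ r)) fun _ _ => Commute.all _ _

lemma evalRingHom_single (r : ℝˣ) (k : ℤ) (b : ℝ) :
    evalRingHom r (AddMonoidAlgebra.single k b) = b * (r : ℝ) ^ k := by
  show AddMonoidAlgebra.liftNC (AddMonoidHom.id ℝ)
    (⇑((Units.coeHom ℝ).comp (zpowersHom ℝˣ r))) (AddMonoidAlgebra.single k b) = b * (r : ℝ) ^ k
  rw [AddMonoidAlgebra.liftNC_single]
  simp [zpowersHom_apply, Units.val_zpow_eq_zpow_val]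

lemma evalAt_eq (r : ℝˣ) (f : LaurentPolynomial ℝ) :
    evalAt f (r : ℝ) = evalRingHom r f := by
  induction f using AddMonoidAlgebra.induction_linear with
  | zero => simp [evalAt]
  | add f g hf hg => rw [evalAt_add, map_add, hf, hg]
  | single k b => rw [evalAt_single, evalRingHom_single]

lemma evalRingHom_toLaurent (r : ℝˣ) (p : Polynomial ℝ) :
    evalRingHom r (Polynomial.toLaurent p) = p.eval (r : ℝ) := by
  induction p using Polynomial.induction_on' with
  | add p q hp hq => rw [map_add, map_add, hp, hq, Polynomial.eval_add]
  | monomial n a =>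
      rw [Polynomial.toLaurent_C_mul_T, ← single_eq_C_mul_T, evalRingHom_single,
        Polynomial.eval_monomial, zpow_natCast]

lemma evalAt_continuousOn (f : LaurentPolynomial ℝ) :
    ContinuousOn (fun x => evalAt f x) (Set.Ioi (0 : ℝ)) := by
  unfold evalAt
  apply continuousOn_finset_sum
  intro k _
  exact continuousOn_const.mul fun x hx =>
    (continuousAt_zpow₀ x k (Or.inl (ne_of_gt hx))).continuousWithinAt

/-- Let `C ⊂ ℝ_{>0}` be compact and `ℳ` an `ℝ[X^±]`-submodule of `(ℝ[X^±])^n`. If for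
every `r ∈ C` some `f_r ∈ ℳ` has all coordinates positive at `r`, then a single
`f_C ∈ ℳ` has all coordinates positive at every point of `C`. -/
theorem stmt13 (n : ℕ) (C : Set ℝ) (hCcompact : IsCompact C) (hCpos : C ⊆ Set.Ioi (0 : ℝ))
    (ℳ : Submodule (LaurentPolynomial ℝ) (Fin n → LaurentPolynomial ℝ))
    (hloc : ∀ r ∈ C, ∃ f ∈ ℳ, ∀ i : Fin n, 0 < evalAt (f i) r) :
    ∃ f ∈ ℳ, ∀ x ∈ C, ∀ i : Fin n, 0 < evalAt (f i) x := by
  classical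
  rcases Set.eq_empty_or_nonempty C with hCe | hCne
  · exact ⟨0, ℳ.zero_mem, by simp [hCe]⟩
  rcases Nat.eq_zero_or_pos n with hn | hn
  · subst hn; exact ⟨0, ℳ.zero_mem, fun x _ i => i.elim0⟩
  haveI : NeZero n := ⟨hn.ne'⟩
  have key : ∀ r : C, ∃ f : Fin n → LaurentPolynomial ℝ, ∃ V : Set ℝ,
      f ∈ ℳ ∧ IsOpen V ∧ (r : ℝ) ∈ V ∧ V ⊆ Set.Ioi 0 ∧
      ∀ x ∈ V, ∀ i, 0 < evalAt (f i) x := by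
    rintro ⟨r, hr⟩
    obtain ⟨f, hfM, hfpos⟩ := hloc r hr
    have hr0 : (0:ℝ) < r := hCpos hr
    have hev : ∀ᶠ x in nhds r, x ∈ Set.Ioi (0:ℝ) ∧ ∀ i, 0 < evalAt (f i) x := by
      refine Filter.Eventually.and
        (Filter.eventually_of_mem (isOpen_Ioi.mem_nhds hr0) fun x hx => hx) ?_
      rw [Filter.eventually_all]
      intro i
      have hc : ContinuousAt (fun x => evalAt (f i) x) r :=
        (evalAt_continuousOn (f i)).continuousAt (isOpen_Ioi.mem_nhds hr0)
      exact hc.eventually (eventually_gt_nhds (hfpos i))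
    obtain ⟨V, hVsub, hVopen, hrV⟩ := eventually_nhds_iff.mp hev
    exact ⟨f, V, hfM, hVopen, hrV, fun x hx => (hVsub x hx).1, fun x hx => (hVsub x hx).2⟩
  choose F V hFM hVopen hmemV hVsub hFpos using key
  obtain ⟨t, hcover⟩ := hCcompact.elim_finite_subcover V hVopen
    (fun x hx => Set.mem_iUnion.mpr ⟨⟨x, hx⟩, hmemV ⟨x, hx⟩⟩)
  set ψ : C → ℝ → ℝ := fun r x => Metric.infDist x (V r)ᶜ with hψdef
  have hψcont : ∀ r, Continuous (ψ r) := fun r => Metric.continuous_infDist_pt _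
  have hψnn : ∀ r x, 0 ≤ ψ r x := fun r x => Metric.infDist_nonneg
  have hψzero : ∀ r x, x ∉ V r → ψ r x = 0 := fun r x hx => Metric.infDist_zero_of_mem hx
  have hψpos : ∀ r x, x ∈ V r → 0 < ψ r x := by
    intro r x hx
    have hne : ((V r)ᶜ).Nonempty := ⟨0, fun h0 => lt_irrefl (0:ℝ) (hVsub r h0)⟩
    exact ((hVopen r).isClosed_compl.notMem_iff_infDist_pos hne).mp (by simpa using hx)
  set G : Fin n → ℝ → ℝ := fun j x => ∑ r ∈ t, ψ r x * evalAt (F r j) x with hGdef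
  have hGcont : ∀ j, ContinuousOn (G j) (Set.Ioi 0) := fun j =>
    continuousOn_finset_sum _ fun r _ =>
      (hψcont r).continuousOn.mul (evalAt_continuousOn _)
  have hGpos : ∀ x ∈ C, ∀ j, 0 < G j x := by
    intro x hx j
    obtain ⟨r, hrt, hxr⟩ := Set.mem_iUnion₂.mp (hcover hx)
    refine Finset.sum_pos' ?_ ⟨r, hrt, mul_pos (hψpos r x hxr) (hFpos r x hxr j)⟩
    intro s _
    by_cases h : x ∈ V s
    · exact mul_nonneg (hψnn s x) (le_of_lt (hFpos s x h j))
    · simp [hψzero s x h]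
  have hδj : ∀ j, ∃ dd : ℝ, 0 < dd ∧ ∀ x ∈ C, dd ≤ G j x := by
    intro j
    obtain ⟨x0, hx0C, hx0⟩ := hCcompact.exists_isMinOn hCne ((hGcont j).mono hCpos)
    exact ⟨G j x0, hGpos x0 hx0C j, fun x hx => isMinOn_iff.mp hx0 x hx⟩
  choose d hd0 hdle using hδj
  set δ : ℝ := Finset.univ.inf' Finset.univ_nonempty d with hδdef
  have hδ0 : 0 < δ := (Finset.lt_inf'_iff _).mpr fun j _ => hd0 j
  have hδle : ∀ x ∈ C, ∀ j, δ ≤ G j x := fun x hx j =>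
    le_trans (Finset.inf'_le d (Finset.mem_univ j)) (hdle j x hx)
  set S : ℝ → ℝ := fun x => ∑ r ∈ t, ∑ j : Fin n, |evalAt (F r j) x| with hSdef
  have hScont : ContinuousOn S (Set.Ioi 0) :=
    continuousOn_finset_sum _ fun r _ => continuousOn_finset_sum _ fun j _ =>
      (evalAt_continuousOn _).abs
  obtain ⟨x1, hx1C, hx1⟩ := hCcompact.exists_isMaxOn hCne (hScont.mono hCpos)
  set B := S x1 with hBdef
  have hSB : ∀ x ∈ C, S x ≤ B := fun x hx => isMaxOn_iff.mp hx1 x hx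
  have hB0 : 0 ≤ B :=
    Finset.sum_nonneg fun r _ => Finset.sum_nonneg fun j _ => abs_nonneg _
  set ε := δ / (2 * (B + 1)) with hεdef
  have hε0 : 0 < ε := div_pos hδ0 (by linarith)
  set a := sInf C with hadef
  set b := sSup C with hbdef
  have hCab : C ⊆ Set.Icc a b := fun x hx =>
    ⟨csInf_le hCcompact.bddBelow hx, le_csSup hCcompact.bddAbove hx⟩
  have happrox : ∀ r : C, ∃ p : Polynomial ℝ, ∀ x ∈ Set.Icc a b, |p.eval x - ψ r x| < ε :=
    fun r => exists_polynomial_near_of_continuousOn a b (ψ r) (hψcont r).continuousOn ε hε0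
  choose p hp using happrox
  refine ⟨∑ r ∈ t, Polynomial.toLaurent (p r) • F r,
    Submodule.sum_mem _ fun r _ => Submodule.smul_mem _ _ (hFM r), ?_⟩
  intro x hx j
  have hx0 : (0:ℝ) < x := hCpos hx
  set u : ℝˣ := Units.mk0 x (ne_of_gt hx0) with hu
  have hux : (u : ℝ) = x := rfl
  have hcoord : (∑ r ∈ t, Polynomial.toLaurent (p r) • F r) j
      = ∑ r ∈ t, Polynomial.toLaurent (p r) * F r j := by
    simp [Finset.sum_apply, Pi.smul_apply, smul_eq_mul]
  have heval : evalAt ((∑ r ∈ t, Polynomial.toLaurent (p r) • F r) j) x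
      = ∑ r ∈ t, (p r).eval x * evalAt (F r j) x := by
    rw [hcoord, ← hux, evalAt_eq, map_sum]
    refine Finset.sum_congr rfl fun r _ => ?_
    rw [map_mul, evalRingHom_toLaurent, ← evalAt_eq]
  rw [heval]
  have hxab : x ∈ Set.Icc a b := hCab hx
  have h1 : |∑ r ∈ t, (p r).eval x * evalAt (F r j) x - G j x| ≤ ε * S x := by
    rw [hGdef]
    simp only
    rw [← Finset.sum_sub_distrib]
    refine le_trans (Finset.abs_sum_le_sum_abs _ _) ?_
    have hterm : ∀ r ∈ t, |(p r).eval x * evalAt (F r j) x - ψ r x * evalAt (F r j) x|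
        ≤ ε * ∑ j' : Fin n, |evalAt (F r j') x| := by
      intro r _
      rw [← sub_mul, abs_mul]
      exact mul_le_mul (le_of_lt (hp r x hxab))
        (Finset.single_le_sum (f := fun j' => |evalAt (F r j') x|) (fun j' _ => abs_nonneg _) (Finset.mem_univ j))
        (abs_nonneg _) (le_of_lt hε0)
    refine le_trans (Finset.sum_le_sum hterm) ?_
    rw [← Finset.mul_sum]
  have h2 : G j x - ε * S x ≤ ∑ r ∈ t, (p r).eval x * evalAt (F r j) x := by
    have := (abs_le.mp h1).1
    linarith
  have h3 : ε * S x ≤ δ / 2 := by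
    have hSx : S x ≤ B + 1 := by linarith [hSB x hx]
    have h4 : ε * S x ≤ ε * (B + 1) := mul_le_mul_of_nonneg_left hSx (le_of_lt hε0)
    have h5 : ε * (B + 1) = δ / 2 := by
      rw [hεdef]; field_simp
    linarith
  have h6 := hδle x hx j
  linarith
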